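/- Let n be a positive integer and let a be an integer with gcd(a,n) = 1. Then ∏_{j=1}^{n-1} cos(a j π / n) equals (-1)^(a(n-1)/2) / 2^(n-1) if n is odd, and equals 0 if n is even. (If n is odd then n-1 is even, so the exponent is an integer.) -/

import Mathlib

open Real Finset

/-- Decompose `sin (m * π / n)` using division with remainder. -/
lemma sin_decomp (n : ℕ) (hn : 0 < n) (m : ℤ) :
    Real.sin ((m : ℝ) * π / n) =
      (-1 : ℝ) ^ (m / (n : ℤ)) * Real.sin (((m % (n : ℤ) : ℤ) : ℝ) * π / n) := by
  have hn' : (n : ℝ) ≠ 0 := Nat.cast_ne_zero.mpr hn.ne'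
  have hZ : m = m % (n : ℤ) + m / (n : ℤ) * (n : ℤ) := by
    linear_combination (Int.emod_add_mul_ediv m (n : ℤ)).symm
  have h : (m : ℝ) * π / n = ((m % (n : ℤ) : ℤ) : ℝ) * π / n + ((m / (n : ℤ) : ℤ) : ℝ) * π := by
    have hm : (m : ℝ) = ((m % (n : ℤ) : ℤ) : ℝ) + ((m / (n : ℤ) : ℤ) : ℝ) * n := by
      exact_mod_cast congrArg (fun z : ℤ => (z : ℝ)) hZ
    field_simp
    linear_combination hm
  rw [h, Real.sin_add_int_mul_pi]

/-- The map `j ↦ (b*j % n).toNat` sends `Icc 1 (n-1)` into itself when `gcd b n = 1`. -/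
lemma maps_into (n : ℕ) (hn : 0 < n) (b : ℤ) (hb : IsCoprime b (n : ℤ)) :
    ∀ j ∈ Finset.Icc 1 (n - 1), (b * j % (n : ℤ)).toNat ∈ Finset.Icc 1 (n - 1) := by
  intro j hj
  rw [Finset.mem_Icc] at hj ⊢
  have hnz : (n : ℤ) ≠ 0 := by exact_mod_cast hn.ne'
  have h0 : 0 ≤ b * j % (n : ℤ) := Int.emod_nonneg _ hnz
  have h1 : b * j % (n : ℤ) < n := Int.emod_lt_of_pos _ (by exact_mod_cast hn)
  have hne : b * j % (n : ℤ) ≠ 0 := by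
    intro h
    have hdvd : (n : ℤ) ∣ b * j := Int.dvd_of_emod_eq_zero h
    have hdj : (n : ℤ) ∣ (j : ℤ) := (hb.symm).dvd_of_dvd_mul_left hdvd
    have : (n : ℤ) ≤ (j : ℤ) := Int.le_of_dvd (by exact_mod_cast hj.1) hdj
    have : n ≤ j := by exact_mod_cast this
    omega
  omega

/-- Inverse property. -/
lemma inv_prop (n : ℕ) (hn : 0 < n) (b c : ℤ) (hbc : (n : ℤ) ∣ 1 - c * b) :
    ∀ j ∈ Finset.Icc 1 (n - 1), (c * ((b * j % (n : ℤ)).toNat : ℤ) % (n : ℤ)).toNat = j := by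
  intro j hj
  rw [Finset.mem_Icc] at hj
  have hnz : (n : ℤ) ≠ 0 := by exact_mod_cast hn.ne'
  have h0 : 0 ≤ b * j % (n : ℤ) := Int.emod_nonneg _ hnz
  rw [Int.toNat_of_nonneg h0]
  have hmod : c * (b * j % (n : ℤ)) % (n : ℤ) = (j : ℤ) % (n : ℤ) := by
    have h1 : c * (b * j % (n : ℤ)) % (n : ℤ) = c * (b * j) % (n : ℤ) := by
      conv_rhs => rw [Int.mul_emod]
      rw [Int.mul_emod, Int.emod_emod_of_dvd _ dvd_rfl]
    rw [h1]
    have : (c * b) % (n : ℤ) = 1 % (n : ℤ) := Int.modEq_iff_dvd.mpr hbc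
    calc c * (b * j) % (n : ℤ) = (c * b % (n : ℤ)) * ((j : ℤ) % (n : ℤ)) % (n : ℤ) := by
          rw [← Int.mul_emod]; ring_nf
      _ = (1 % (n : ℤ)) * ((j : ℤ) % (n : ℤ)) % (n : ℤ) := by rw [this]
      _ = (j : ℤ) % (n : ℤ) := by rw [← Int.mul_emod, one_mul]
  rw [hmod, Int.emod_eq_of_lt (by exact_mod_cast Nat.zero_le j) (by exact_mod_cast (show j < n by omega))]
  exact Int.toNat_natCast j


lemma prod_zpow_sum (s : Finset ℕ) (f : ℕ → ℤ) :
    ∏ j ∈ s, (-1 : ℝ) ^ (f j) = (-1 : ℝ) ^ (∑ j ∈ s, f j) := by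
  induction s using Finset.cons_induction with
  | empty => simp
  | cons a s ha ih =>
    rw [Finset.prod_cons, Finset.sum_cons, ih, zpow_add₀ (by norm_num : (-1:ℝ) ≠ 0)]

lemma prod_reindex {M : Type*} [CommMonoid M] (n : ℕ) (hn : 0 < n) (b : ℤ)
    (hb : Int.gcd b n = 1) (F : ℕ → M) :
    ∏ j ∈ Finset.Icc 1 (n - 1), F ((b * j % (n : ℤ)).toNat)
      = ∏ j ∈ Finset.Icc 1 (n - 1), F j := by
  have hb' : IsCoprime b (n : ℤ) := Int.isCoprime_iff_gcd_eq_one.mpr hb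
  obtain ⟨u, v, huv⟩ := hb'
  have hb'' : IsCoprime b (n : ℤ) := ⟨u, v, huv⟩
  have hc : IsCoprime u (n : ℤ) := ⟨b, v, by linear_combination huv⟩
  refine Finset.prod_nbij' (fun j => (b * j % (n : ℤ)).toNat)
    (fun j => (u * j % (n : ℤ)).toNat)
    (maps_into n hn b hb'') (maps_into n hn u hc) ?_ ?_ ?_
  · exact inv_prop n hn b u ⟨v, by linear_combination -huv⟩
  · exact inv_prop n hn u b ⟨v, by linear_combination -huv⟩
  · intro j hj; rfl

lemma sum_reindex (n : ℕ) (hn : 0 < n) (b : ℤ) (hb : Int.gcd b n = 1) :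
    ∑ j ∈ Finset.Icc 1 (n - 1), b * j % (n : ℤ) = ∑ j ∈ Finset.Icc 1 (n - 1), (j : ℤ) := by
  have h := prod_reindex (M := Multiplicative ℤ) n hn b hb
    (fun k => Multiplicative.ofAdd (k : ℤ))
  have h2 : ∑ j ∈ Finset.Icc 1 (n - 1), (((b * j % (n : ℤ)).toNat : ℕ) : ℤ)
      = ∑ j ∈ Finset.Icc 1 (n - 1), (j : ℤ) := h
  calc ∑ j ∈ Finset.Icc 1 (n - 1), b * j % (n : ℤ)
      = ∑ j ∈ Finset.Icc 1 (n - 1), (((b * j % (n : ℤ)).toNat : ℕ) : ℤ) := by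
        refine Finset.sum_congr rfl fun j hj => ?_
        rw [Int.toNat_of_nonneg (Int.emod_nonneg _ (by exact_mod_cast hn.ne'))]
    _ = ∑ j ∈ Finset.Icc 1 (n - 1), (j : ℤ) := h2

lemma gauss_icc (k : ℕ) : (∑ j ∈ Finset.Icc 1 k, (j : ℤ)) * 2 = k * (k + 1) := by
  induction k with
  | zero => simp
  | succ t ih =>
    rw [Finset.sum_Icc_succ_top (by omega : 1 ≤ t + 1)]
    push_cast
    push_cast at ih
    linarith

lemma sum_ediv (n m : ℕ) (hn : n = 2 * m + 1) (b : ℤ) (hb : Int.gcd b n = 1) :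
    ∑ j ∈ Finset.Icc 1 (n - 1), b * j / (n : ℤ) = (b - 1) * m := by
  have hn0 : 0 < n := by omega
  have hnz : (n : ℤ) ≠ 0 := by exact_mod_cast hn0.ne'
  have hgauss : ∑ j ∈ Finset.Icc 1 (n - 1), (j : ℤ) = m * n := by
    have := gauss_icc (n - 1)
    have hcast : ((n - 1 : ℕ) : ℤ) = 2 * m := by
      subst hn; push_cast; omega
    rw [hcast] at this
    have hcast2 : (n : ℤ) = 2 * m + 1 := by exact_mod_cast hn
    rw [hcast2]
    linarith
  have key : (n : ℤ) * (∑ j ∈ Finset.Icc 1 (n - 1), b * j / (n : ℤ))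
      = (b - 1) * m * n := by
    rw [Finset.mul_sum]
    have : ∀ j ∈ Finset.Icc 1 (n - 1), (n : ℤ) * (b * j / (n : ℤ))
        = b * j - b * j % (n : ℤ) := by
      intro j hj
      linear_combination (Int.emod_add_mul_ediv (b * j) (n : ℤ))
    rw [Finset.sum_congr rfl this, Finset.sum_sub_distrib, sum_reindex n hn0 b hb]
    rw [← Finset.mul_sum, hgauss]
    ring
  have key2 : (n : ℤ) * (∑ j ∈ Finset.Icc 1 (n - 1), b * j / (n : ℤ))
      = (n : ℤ) * ((b - 1) * m) := by rw [key]; ring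
  exact mul_left_cancel₀ hnz key2

lemma prod_sin_eq (n m : ℕ) (hnm : n = 2 * m + 1) (b : ℤ) (hb : Int.gcd b n = 1) :
    ∏ j ∈ Finset.Icc 1 (n - 1), Real.sin ((b : ℝ) * j * π / n) =
      (-1 : ℝ) ^ ((b - 1) * (m : ℤ)) *
        ∏ j ∈ Finset.Icc 1 (n - 1), Real.sin ((j : ℝ) * π / n) := by
  have hn0 : 0 < n := by omega
  have step : ∀ j ∈ Finset.Icc 1 (n - 1), Real.sin ((b : ℝ) * j * π / n) =
      (-1 : ℝ) ^ (b * j / (n : ℤ)) *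
        Real.sin ((((b * j % (n : ℤ)).toNat : ℕ) : ℝ) * π / n) := by
    intro j hj
    have h := sin_decomp n hn0 (b * j)
    have h1 : ((b * (j : ℤ) : ℤ) : ℝ) = (b : ℝ) * j := by push_cast; ring
    have hnz' : (n : ℤ) ≠ 0 := by exact_mod_cast hn0.ne'
    have h2 : ((b * (j : ℤ) % (n : ℤ) : ℤ) : ℝ)
        = (((b * j % (n : ℤ)).toNat : ℕ) : ℝ) := by
      have := Int.toNat_of_nonneg (Int.emod_nonneg (b * (j : ℤ)) hnz')
      exact_mod_cast (congrArg (fun z : ℤ => (z : ℝ)) this).symm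
    rw [h1, h2] at h
    exact h
  rw [Finset.prod_congr rfl step, Finset.prod_mul_distrib, prod_zpow_sum,
    sum_ediv n m hnm b hb,
    prod_reindex n hn0 b hb (fun k => Real.sin ((k : ℝ) * π / n))]

theorem prod_cos_eq (n : ℕ) (hn : 0 < n) (a : ℤ) (ha : Int.gcd a n = 1) :
    ∏ j ∈ Finset.Icc 1 (n - 1), Real.cos (a * j * π / n) =
      if Odd n then (-1 : ℝ) ^ (a * ((n : ℤ) - 1) / 2) / 2 ^ (n - 1) else 0 := by
  rcases Nat.even_or_odd n with he | ho
  · -- even case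
    rw [if_neg (by simpa [Nat.odd_iff, Nat.even_iff] using he)]
    obtain ⟨k, hk⟩ := he
    have hk1 : 1 ≤ k := by omega
    have hodd : Odd a := by
      rcases Int.even_or_odd a with hea | hoa
      · exfalso
        obtain ⟨t, ht⟩ := hea
        have h2 : (2 : ℕ) ∣ Int.gcd a n := Nat.dvd_gcd (by omega) (by omega)
        rw [ha] at h2
        omega
      · exact hoa
    obtain ⟨t, ht⟩ := hodd
    apply Finset.prod_eq_zero (show k ∈ Finset.Icc 1 (n - 1) from Finset.mem_Icc.mpr ⟨hk1, by omega⟩)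
    have hk0 : (k : ℝ) ≠ 0 := Nat.cast_ne_zero.mpr (by omega)
    have harg : (a : ℝ) * k * π / n = (2 * (t : ℝ) + 1) * π / 2 := by
      have hnr : (n : ℝ) = 2 * k := by rw [hk]; push_cast; ring
      rw [hnr]
      have har : (a : ℝ) = 2 * t + 1 := by exact_mod_cast congrArg (fun z : ℤ => (z : ℝ)) ht
      rw [har]
      field_simp
    rw [harg]
    exact Real.cos_eq_zero_iff.mpr ⟨t, rfl⟩
  · -- odd case
    rw [if_pos ho]
    obtain ⟨m, hm⟩ := ho
    have hn' : (n : ℤ) = 2 * m + 1 := by exact_mod_cast hm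
    have hexp : a * ((n : ℤ) - 1) / 2 = a * m := by
      rw [hn', show a * (2 * (m : ℤ) + 1 - 1) = a * m * 2 by ring,
        Int.mul_ediv_cancel _ two_ne_zero]
    rw [hexp]
    have hnR : (n : ℝ) ≠ 0 := Nat.cast_ne_zero.mpr hn.ne'
    have hπ : π ≠ 0 := Real.pi_ne_zero
    have haN : Nat.Coprime a.natAbs n := by simpa [Int.gcd] using ha
    have h2n : Nat.Coprime 2 n := (Nat.prime_two.coprime_iff_not_dvd).mpr (by omega)
    have hcop2 : Int.gcd (2 * a) n = 1 := by
      have : Nat.Coprime ((2 * a).natAbs) n := by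
        rw [Int.natAbs_mul]
        exact Nat.Coprime.mul (by simpa using h2n) haN
      simpa [Int.gcd] using this
    have hsin_ne : ∀ j ∈ Finset.Icc 1 (n - 1), Real.sin ((a : ℝ) * j * π / n) ≠ 0 := by
      intro j hj h0
      rw [Finset.mem_Icc] at hj
      rw [Real.sin_eq_zero_iff] at h0
      obtain ⟨k, hk⟩ := h0
      have hR : (k : ℝ) * n = (a : ℝ) * j := by
        have h := hk
        field_simp at h
        apply mul_right_cancel₀ hπ
        linear_combination π * h
      have hZ : (k : ℤ) * n = a * j := by exact_mod_cast hR
      have hdvd : (n : ℤ) ∣ a * j := ⟨k, by linear_combination -hZ⟩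
      have hdj : (n : ℤ) ∣ (j : ℤ) :=
        ((Int.isCoprime_iff_gcd_eq_one.mpr ha).symm).dvd_of_dvd_mul_left hdvd
      have : (n : ℤ) ≤ (j : ℤ) := Int.le_of_dvd (by exact_mod_cast hj.1) hdj
      have : n ≤ j := by exact_mod_cast this
      omega
    have hterm : ∀ j ∈ Finset.Icc 1 (n - 1), Real.cos ((a : ℝ) * j * π / n) =
        Real.sin (((2 * a : ℤ) : ℝ) * j * π / n) / (2 * Real.sin ((a : ℝ) * j * π / n)) := by
      intro j hj
      have h2x : ((2 * a : ℤ) : ℝ) * j * π / n = 2 * ((a : ℝ) * j * π / n) := by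
        push_cast; ring
      rw [h2x, Real.sin_two_mul, eq_div_iff (by
        exact mul_ne_zero two_ne_zero (hsin_ne j hj))]
      ring
    rw [Finset.prod_congr rfl hterm, Finset.prod_div_distrib, Finset.prod_mul_distrib,
      Finset.prod_const, Nat.card_Icc]
    have hcard : n - 1 + 1 - 1 = n - 1 := by omega
    rw [hcard]
    rw [prod_sin_eq n m hm (2 * a) hcop2, prod_sin_eq n m hm a ha]
    have hS : 0 < ∏ j ∈ Finset.Icc 1 (n - 1), Real.sin ((j : ℝ) * π / n) := by
      apply Finset.prod_pos
      intro j hj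
      rw [Finset.mem_Icc] at hj
      apply Real.sin_pos_of_pos_of_lt_pi
      · have : (0 : ℝ) < (j : ℝ) := by exact_mod_cast hj.1
        positivity
      · rw [div_lt_iff₀ (by positivity)]
        have hjn : (j : ℝ) < n := by exact_mod_cast (by omega : j < n)
        nlinarith [Real.pi_pos]
    have hz : (-1 : ℝ) ≠ 0 := by norm_num
    have e1 : (-1 : ℝ) ^ ((2 * a - 1) * (m : ℤ)) =
        (-1 : ℝ) ^ (a * (m : ℤ)) * (-1 : ℝ) ^ ((a - 1) * (m : ℤ)) := by
      rw [← zpow_add₀ hz]; congr 1; ring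
    rw [e1]
    have hzp : (-1 : ℝ) ^ ((a - 1) * (m : ℤ)) ≠ 0 := zpow_ne_zero _ hz
    have hS' := hS.ne'
    field_simp
    ring_nf
    have hP1 : ∏ x ∈ Finset.Icc 1 (n - 1), Real.sin ((x : ℝ) * π * (n : ℝ)⁻¹) =
        ∏ x ∈ Finset.Icc 1 (n - 1), Real.sin (π * (n : ℝ)⁻¹ * x) :=
      Finset.prod_congr rfl fun x _ => by ring_nf
    have hP2 : ∏ x ∈ Finset.Icc 1 (n - 1), Real.sin ((x : ℝ) * π / n) =
        ∏ x ∈ Finset.Icc 1 (n - 1), Real.sin (π * (n : ℝ)⁻¹ * x) :=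
      Finset.prod_congr rfl fun x _ => by ring_nf
    rw [hP1]
    exact mul_inv_cancel₀ (hP2 ▸ hS')
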